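/- For any unit f ∈ L²(ℝ) with support in [-1,1] and any R > 0, the tail probability ∫_{|y|>R} |F(f)(y)|² dy is strictly positive (no nonzero compactly supported function is band-limited). -/

import Mathlib

open MeasureTheory Real Set Filter Metric
open scoped ENNReal NNReal

noncomputable def FT (f : ℝ → ℂ) (y : ℝ) : ℂ :=
  ((1 / Real.sqrt (2 * Real.pi) : ℝ) : ℂ) *
    ∫ x : ℝ, f x * Complex.exp (Complex.I * x * y)

noncomputable def FTC (f : ℝ → ℂ) (z : ℂ) : ℂ :=
  ∫ x : ℝ, f x * Complex.exp (Complex.I * x * z)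

lemma FT_eq_FTC (f : ℝ → ℂ) (y : ℝ) :
    FT f y = ((1 / Real.sqrt (2 * Real.pi) : ℝ) : ℂ) * FTC f y := rfl

lemma integrable_of_supp {f : ℝ → ℂ} (hf : MemLp f 2 (volume : Measure ℝ))
    (hsupp : Function.support f ⊆ Set.Icc (-1) 1) : Integrable f := by
  refine memLp_one_iff_integrable.mp ?_
  refine hf.mono_exponent_of_measure_support_ne_top
    (s := Set.Icc (-1) 1) (fun x hx => ?_) (by simp [Real.volume_Icc]) one_le_two
  by_contra h
  exact hx (hsupp h)

lemma norm_mul_exp_le {f : ℝ → ℂ} (hsupp : Function.support f ⊆ Set.Icc (-1) 1)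
    (x : ℝ) (z : ℂ) : ‖f x * Complex.exp (Complex.I * x * z)‖ ≤ ‖f x‖ * Real.exp ‖z‖ := by
  by_cases hx : f x = 0
  · simp [hx, Real.exp_nonneg]
  · have hx1 : |x| ≤ 1 := by
      have := hsupp hx
      rw [abs_le]; exact ⟨this.1, this.2⟩
    rw [norm_mul, Complex.norm_exp]
    have hre : (Complex.I * x * z).re = -(x * z.im) := by simp [Complex.mul_re]
    rw [hre]
    have h1 : -(x * z.im) ≤ ‖z‖ := by
      have : |x * z.im| ≤ |z.im| := by
        rw [abs_mul]
        nlinarith [abs_nonneg z.im, abs_nonneg x]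
      have h2 := Complex.abs_im_le_norm z
      calc -(x * z.im) ≤ |x * z.im| := neg_le_abs _
        _ ≤ |z.im| := this
        _ ≤ ‖z‖ := h2
    exact mul_le_mul_of_nonneg_left (Real.exp_le_exp.mpr h1) (norm_nonneg _)

lemma integrable_integrand {f : ℝ → ℂ} (hi : Integrable f)
    (hsupp : Function.support f ⊆ Set.Icc (-1) 1) (z : ℂ) :
    Integrable (fun x : ℝ => f x * Complex.exp (Complex.I * x * z)) := by
  refine Integrable.mono (hi.norm.mul_const (Real.exp ‖z‖))
    (hi.aestronglyMeasurable.mul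
      (Complex.continuous_exp.comp (by fun_prop)).aestronglyMeasurable)
    (ae_of_all _ fun x => ?_)
  exact (norm_mul_exp_le hsupp x z).trans (le_abs_self _)

lemma norm_deriv_integrand_le {f : ℝ → ℂ} (hsupp : Function.support f ⊆ Set.Icc (-1) 1)
    (x : ℝ) (z : ℂ) :
    ‖f x * (Complex.I * x * Complex.exp (Complex.I * x * z))‖ ≤ ‖f x‖ * Real.exp ‖z‖ := by
  by_cases hx : f x = 0
  · simp [hx, Real.exp_nonneg]
  · have hx1 : |x| ≤ 1 := by
      have := hsupp hx
      rw [abs_le]; exact ⟨this.1, this.2⟩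
    have hb := norm_mul_exp_le hsupp x z
    rw [norm_mul] at hb ⊢
    rw [norm_mul]
    have hIx : ‖Complex.I * (x:ℂ)‖ ≤ 1 := by
      rw [norm_mul, Complex.norm_I, one_mul, Complex.norm_real, Real.norm_eq_abs]
      exact hx1
    calc ‖f x‖ * (‖Complex.I * (x:ℂ)‖ * ‖Complex.exp (Complex.I * x * z)‖)
        ≤ ‖f x‖ * (1 * ‖Complex.exp (Complex.I * x * z)‖) := by
          have := mul_le_mul_of_nonneg_right hIx (norm_nonneg (Complex.exp (Complex.I * x * z)))
          exact mul_le_mul_of_nonneg_left this (norm_nonneg _)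
      _ = ‖f x‖ * ‖Complex.exp (Complex.I * x * z)‖ := by ring
      _ ≤ ‖f x‖ * Real.exp ‖z‖ := hb

lemma differentiable_FTC {f : ℝ → ℂ} (hi : Integrable f)
    (hsupp : Function.support f ⊆ Set.Icc (-1) 1) :
    Differentiable ℂ (FTC f) := by
  intro z₀
  have key := hasDerivAt_integral_of_dominated_loc_of_deriv_le
    (F := fun (z : ℂ) (x : ℝ) => f x * Complex.exp (Complex.I * x * z))
    (F' := fun (z : ℂ) (x : ℝ) => f x * (Complex.I * x * Complex.exp (Complex.I * x * z)))
    (x₀ := z₀) (bound := fun x => ‖f x‖ * Real.exp (‖z₀‖ + 1))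
    (s := ball z₀ 1) (ball_mem_nhds z₀ one_pos)
    (Filter.Eventually.of_forall fun z =>
      (hi.aestronglyMeasurable.mul
        (Complex.continuous_exp.comp (by fun_prop)).aestronglyMeasurable))
    (integrable_integrand hi hsupp z₀)
    (hi.aestronglyMeasurable.mul
      (Continuous.aestronglyMeasurable (by
        have : Continuous fun x : ℝ => Complex.exp (Complex.I * (x:ℂ) * z₀) :=
          Complex.continuous_exp.comp (by fun_prop)
        fun_prop)))
    (ae_of_all _ fun x z hz => ?_)
    ((hi.norm.mul_const _))
    (ae_of_all _ fun x z hz => ?_)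
  · exact key.2.differentiableAt
  · calc ‖f x * (Complex.I * x * Complex.exp (Complex.I * x * z))‖
        ≤ ‖f x‖ * Real.exp ‖z‖ := norm_deriv_integrand_le hsupp x z
      _ ≤ ‖f x‖ * Real.exp (‖z₀‖ + 1) := by
          have hz' : ‖z‖ ≤ ‖z₀‖ + 1 := by
            have := mem_ball_iff_norm.mp hz
            have h2 := norm_sub_norm_le z z₀
            linarith
          exact mul_le_mul_of_nonneg_left (Real.exp_le_exp.mpr hz') (norm_nonneg _)
  · have h : HasDerivAt (fun z : ℂ => Complex.I * (x:ℂ) * z) (Complex.I * x) z := by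
      simpa using (hasDerivAt_id z).const_mul (Complex.I * (x:ℂ))
    have h2 := h.cexp
    have h3 := h2.const_mul (f x)
    exact h3.congr_deriv (by ring)

lemma continuous_FT {f : ℝ → ℂ} (hi : Integrable f)
    (hsupp : Function.support f ⊆ Set.Icc (-1) 1) : Continuous (FT f) := by
  have h1 : Continuous (FTC f) := (differentiable_FTC hi hsupp).continuous
  have : FT f = fun y : ℝ => ((1 / Real.sqrt (2 * Real.pi) : ℝ) : ℂ) * FTC f y := rfl
  rw [this]
  exact continuous_const.mul (h1.comp Complex.continuous_ofReal)

local instance fact_two_pi_pos : Fact ((0:ℝ) < 2 * π) := ⟨by positivity⟩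

lemma supp_subset_Ioc {f : ℝ → ℂ} (hsupp : Function.support f ⊆ Set.Icc (-1) 1) :
    Function.support f ⊆ Set.Ioc (-π) (-π + 2 * π) := by
  intro x hx
  have := hsupp hx
  have hpi := Real.pi_gt_three
  constructor <;> [linarith [this.1]; linarith [this.2]]

lemma key_parseval {f : ℝ → ℂ} (hsm : StronglyMeasurable f)
    (hf : MemLp f 2 (volume : Measure ℝ))
    (hsupp : Function.support f ⊆ Set.Icc (-1) 1) (t : ℝ) :
    HasSum (fun n : ℤ => ‖FT f (t - n)‖ ^ 2) (∫ x : ℝ, ‖f x‖ ^ 2) := by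
  classical
  set g : ℝ → ℂ := fun x => f x * Complex.exp (Complex.I * x * t) with hg
  have hgm : StronglyMeasurable g :=
    hsm.mul (Complex.continuous_exp.comp (by fun_prop)).stronglyMeasurable
  have hgnorm : ∀ x, ‖g x‖ = ‖f x‖ := by
    intro x
    rw [hg]
    simp only [norm_mul]
    rw [Complex.norm_exp]
    have : (Complex.I * x * t).re = 0 := by simp [Complex.mul_re]
    rw [this, Real.exp_zero, mul_one]
  have hg2 : MemLp g 2 (volume : Measure ℝ) :=
    hf.of_le hgm.aestronglyMeasurable (ae_of_all _ fun x => (hgnorm x).le)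
  set G : AddCircle (2 * π) → ℂ := AddCircle.liftIoc (2 * π) (-π) g with hG
  have hGm : StronglyMeasurable G := by
    have : G = g ∘ ((↑) : Set.Ioc (-π) (-π + 2*π) → ℝ) ∘ (AddCircle.measurableEquivIoc (2*π) (-π)) := rfl
    rw [this]
    exact hgm.comp_measurable
      (measurable_subtype_coe.comp (AddCircle.measurableEquivIoc (2*π) (-π)).measurable)
  have hmapeq : Measure.map ((↑) : ℝ → AddCircle (2*π))
      (volume.restrict (Set.Ioc (-π) (-π + 2*π))) = (volume : Measure (AddCircle (2*π))) :=
    (AddCircle.measurePreserving_mk (2*π) (-π)).map_eq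
  have hGvol : MemLp G 2 (volume : Measure (AddCircle (2*π))) := by
    rw [← hmapeq]
    rw [memLp_map_measure_iff (by rw [hmapeq]; exact hGm.aestronglyMeasurable)
      AddCircle.measurable_mk'.aemeasurable]
    have hcongr : (G ∘ ((↑) : ℝ → AddCircle (2*π)))
        =ᵐ[volume.restrict (Set.Ioc (-π) (-π+2*π))] g := by
      refine (ae_restrict_iff' measurableSet_Ioc).mpr (ae_of_all _ fun x hx => ?_)
      exact AddCircle.liftIoc_coe_apply hx
    exact (memLp_congr_ae hcongr).mpr (hg2.restrict _)
  have htpne : ENNReal.ofReal (2*π) ≠ 0 := by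
    simp [ENNReal.ofReal_eq_zero]
    positivity
  have hhaar_eq : (ENNReal.ofReal (2*π))⁻¹ • (volume : Measure (AddCircle (2*π)))
      = (AddCircle.haarAddCircle : Measure (AddCircle (2*π))) := by
    rw [AddCircle.volume_eq_smul_haarAddCircle, smul_smul,
      ENNReal.inv_mul_cancel htpne ENNReal.ofReal_ne_top, one_smul]
  have hG2 : MemLp G 2 (AddCircle.haarAddCircle : Measure (AddCircle (2*π))) := by
    rw [← hhaar_eq]
    exact hGvol.smul_measure (by simpa using ENNReal.inv_ne_top.mpr htpne)
  have hIccIoc : Function.support f ⊆ Set.Ioc (-π) (-π + 2 * π) := supp_subset_Ioc hsupp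
  have hcoeff : ∀ n : ℤ, fourierCoeff G n
      = ((1 / (2*π) : ℝ) : ℂ) * ∫ x : ℝ, f x * Complex.exp (Complex.I * x * ((t - n : ℝ) : ℂ)) := by
    intro n
    rw [hG, fourierCoeff_liftIoc_eq, fourierCoeffOn_eq_integral]
    rw [intervalIntegral.integral_of_le (by linarith [Real.pi_pos])]
    have hset : ∫ x in Set.Ioc (-π) (-π + 2*π),
        (fourier (-n) (x : AddCircle ((-π + 2*π) - (-π)))) • g x
        = ∫ x : ℝ, (fourier (-n) (x : AddCircle ((-π + 2*π) - (-π)))) • g x := by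
      refine setIntegral_eq_integral_of_forall_compl_eq_zero fun x hx => ?_
      have : g x = 0 := by
        by_contra h
        have : f x ≠ 0 := fun h0 => h (by simp [hg, h0])
        exact hx (hIccIoc this)
      simp [this]
    rw [hset]
    have hintegrand : ∀ x : ℝ, (fourier (-n) (x : AddCircle ((-π + 2*π) - (-π)))) • g x
        = f x * Complex.exp (Complex.I * x * ((t - n : ℝ) : ℂ)) := by
      intro x
      rw [fourier_coe_apply, smul_eq_mul, hg, mul_left_comm, ← Complex.exp_add]
      congr 1
      have hpne : (π : ℂ) ≠ 0 := by exact_mod_cast Real.pi_ne_zero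
      congr 1
      field_simp
      push_cast
      ring
    simp_rw [hintegrand]
    rw [Complex.real_smul]
    congr 2
    push_cast
    ring
  -- relate fourierCoeff G to FT f
  have hFT : ∀ n : ℤ, ‖fourierCoeff G n‖ ^ 2 = (1 / (2*π)) * ‖FT f (t - n)‖ ^ 2 := by
    intro n
    have h2pi : (0:ℝ) < 2*π := by positivity
    have hsq : Real.sqrt (2*π) ^ 2 = 2*π := Real.sq_sqrt h2pi.le
    rw [hcoeff n]
    have hFTn : FT f (t - n)
        = ((1 / Real.sqrt (2 * π) : ℝ) : ℂ)
          * ∫ x : ℝ, f x * Complex.exp (Complex.I * x * ((t - n : ℝ) : ℂ)) := rfl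
    rw [hFTn]
    rw [norm_mul, norm_mul, mul_pow, mul_pow]
    rw [Complex.norm_real, Complex.norm_real, Real.norm_eq_abs, Real.norm_eq_abs]
    rw [abs_of_pos (by positivity), abs_of_pos (by positivity : (0:ℝ) < 1 / Real.sqrt (2*π))]
    rw [div_pow, div_pow, hsq, one_pow]
    ring
  -- the Lp element
  set F : Lp ℂ 2 (AddCircle.haarAddCircle : Measure (AddCircle (2*π))) := hG2.toLp G with hF
  have hF_ae : ⇑F =ᵐ[(AddCircle.haarAddCircle : Measure (AddCircle (2*π)))] G :=
    hG2.coeFn_toLp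
  have hFcoeff : ∀ n : ℤ, fourierCoeff (⇑F) n = fourierCoeff G n := by
    intro n
    exact integral_congr_ae (hF_ae.mono fun z hz => by dsimp only; rw [hz])
  have hparseval := tsum_sq_fourierCoeff F
  have hsummable : Summable fun n : ℤ => ‖fourierCoeff (⇑F) n‖ ^ 2 := by
    have hrepr : ∀ n : ℤ, fourierCoeff (⇑F) n = fourierBasis.repr F n := by
      intro n; rw [fourierBasis_repr]
    have hml := lp.memℓp (fourierBasis.repr F)
    have hs := (memℓp_gen_iff (by norm_num : (0:ℝ) < ((2:ℝ≥0∞)).toReal)).mp hml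
    simp only [ENNReal.toReal_ofNat] at hs
    have : ∀ n : ℤ, ‖fourierBasis.repr F n‖ ^ (2:ℝ) = ‖fourierCoeff (⇑F) n‖ ^ (2:ℕ) := by
      intro n
      rw [hrepr n, ← Real.rpow_natCast]
      norm_num
    exact (summable_congr this).mp hs
  -- RHS of parseval
  have hRHS : (∫ z, ‖F z‖ ^ 2 ∂(AddCircle.haarAddCircle : Measure (AddCircle (2*π))))
      = (1 / (2*π)) * ∫ x : ℝ, ‖f x‖ ^ 2 := by
    have h1 : (∫ z, ‖F z‖ ^ 2 ∂(AddCircle.haarAddCircle : Measure (AddCircle (2*π))))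
        = ∫ z, ‖G z‖ ^ 2 ∂(AddCircle.haarAddCircle : Measure (AddCircle (2*π))) :=
      integral_congr_ae (hF_ae.mono fun z hz => by dsimp only; rw [hz])
    have h2 : (∫ z, ‖G z‖ ^ 2 ∂(volume : Measure (AddCircle (2*π))))
        = (2*π) * ∫ z, ‖G z‖ ^ 2 ∂(AddCircle.haarAddCircle : Measure (AddCircle (2*π))) := by
      rw [AddCircle.volume_eq_smul_haarAddCircle, integral_smul_measure,
        ENNReal.toReal_ofReal (by positivity : (0:ℝ) ≤ 2*π), smul_eq_mul]
    have h3 : (∫ z, ‖G z‖ ^ 2 ∂(volume : Measure (AddCircle (2*π))))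
        = ∫ x in Set.Ioc (-π) (-π + 2*π), ‖G (x : AddCircle (2*π))‖ ^ 2 :=
      (AddCircle.integral_preimage (2*π) (-π) _).symm
    have h4 : (∫ x in Set.Ioc (-π) (-π + 2*π), ‖G (x : AddCircle (2*π))‖ ^ 2)
        = ∫ x in Set.Ioc (-π) (-π + 2*π), ‖f x‖ ^ 2 := by
      refine setIntegral_congr_fun measurableSet_Ioc fun x hx => ?_
      rw [hG, AddCircle.liftIoc_coe_apply hx, hgnorm]
    have h5 : (∫ x in Set.Ioc (-π) (-π + 2*π), ‖f x‖ ^ 2) = ∫ x : ℝ, ‖f x‖ ^ 2 := by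
      refine setIntegral_eq_integral_of_forall_compl_eq_zero fun x hx => ?_
      have : f x = 0 := by
        by_contra h
        exact hx (hIccIoc h)
      simp [this]
    have hpi : (2*π) ≠ 0 := by positivity
    rw [h3, h4, h5] at h2
    rw [h1, h2]
    field_simp
  -- assemble
  have hsum2 : HasSum (fun n : ℤ => ‖fourierCoeff (⇑F) n‖ ^ 2)
      ((1 / (2*π)) * ∫ x : ℝ, ‖f x‖ ^ 2) := by
    have := hsummable.hasSum
    rwa [hparseval, hRHS] at this
  have hfun : (fun n : ℤ => ‖fourierCoeff (⇑F) n‖ ^ 2)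
      = fun n : ℤ => (1 / (2*π)) * ‖FT f (t - n)‖ ^ 2 :=
    funext fun n => by rw [hFcoeff n, hFT n]
  rw [hfun] at hsum2
  have hsum4 := hsum2.mul_left (2*π)
  have h2pi : (2*π) ≠ 0 := by positivity
  have hfun2 : (fun n : ℤ => (2*π) * ((1 / (2*π)) * ‖FT f (t - n)‖ ^ 2))
      = fun n : ℤ => ‖FT f (t - n)‖ ^ 2 := funext fun n => by field_simp
  have hval : (2*π) * ((1 / (2*π)) * ∫ x : ℝ, ‖f x‖ ^ 2) = ∫ x : ℝ, ‖f x‖ ^ 2 := by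
    field_simp
  rwa [hfun2, hval] at hsum4

lemma integrable_sq_FT {f : ℝ → ℂ} (hsm : StronglyMeasurable f)
    (hf : MemLp f 2 (volume : Measure ℝ))
    (hsupp : Function.support f ⊆ Set.Icc (-1) 1) :
    Integrable (fun y : ℝ => ‖FT f y‖ ^ 2) := by
  have hi : Integrable f := integrable_of_supp hf hsupp
  have hcont : Continuous fun y : ℝ => ‖FT f y‖ ^ 2 := (continuous_FT hi hsupp).norm.pow 2
  refine ⟨hcont.aestronglyMeasurable, ?_⟩
  rw [hasFiniteIntegral_iff_ofReal (ae_of_all _ fun y => by positivity)]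
  set φ : ℝ → ℝ≥0∞ := fun y => ENNReal.ofReal (‖FT f y‖ ^ 2) with hφ
  have hφm : Measurable φ := hcont.measurable.ennreal_ofReal
  have hsum' : ∀ s : ℝ, HasSum (fun n : ℤ => ‖FT f (s + n)‖ ^ 2) (∫ x : ℝ, ‖f x‖ ^ 2) := by
    intro s
    have h := key_parseval hsm hf hsupp s
    have h2 : HasSum ((fun n : ℤ => ‖FT f (s - n)‖ ^ 2) ∘ (Equiv.neg ℤ)) (∫ x : ℝ, ‖f x‖ ^ 2) :=
      ((Equiv.neg ℤ).hasSum_iff).mpr h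
    have heq : ((fun n : ℤ => ‖FT f (s - n)‖ ^ 2) ∘ (Equiv.neg ℤ))
        = fun n : ℤ => ‖FT f (s + n)‖ ^ 2 := by
      funext n
      simp only [Function.comp, Equiv.neg_apply]
      norm_num [sub_neg_eq_add]
    rwa [heq] at h2
  have htsum : ∀ s : ℝ, (∑' n : ℤ, φ (s + n)) = ENNReal.ofReal (∫ x : ℝ, ‖f x‖ ^ 2) := by
    intro s
    rw [← (hsum' s).tsum_eq]
    exact (ENNReal.ofReal_tsum_of_nonneg (fun n => by positivity) (hsum' s).summable).symm
  have hdecomp : (∫⁻ y, φ y) = ∑' n : ℤ, ∫⁻ y in Set.Ico (n:ℝ) (n+1), φ y := by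
    conv_lhs => rw [← setLIntegral_univ, ← iUnion_Ico_intCast (α := ℝ)]
    exact lintegral_iUnion (fun n => measurableSet_Ico) (pairwise_disjoint_Ico_intCast ℝ) φ
  have htrans : ∀ n : ℤ, (∫⁻ y in Set.Ico (n:ℝ) (n+1), φ y)
      = ∫⁻ s in Set.Ico (0:ℝ) 1, φ (s + n) := by
    intro n
    have hmp := measurePreserving_add_right (volume : Measure ℝ) (n : ℝ)
    have h := hmp.setLIntegral_comp_preimage
      (measurableSet_Ico : MeasurableSet (Set.Ico (n:ℝ) (n+1))) hφm
    rw [← h]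
    have hpre : (fun x : ℝ => x + (n:ℝ)) ⁻¹' Set.Ico ((n:ℝ)) ((n:ℝ)+1) = Set.Ico (0:ℝ) 1 := by
      rw [Set.preimage_add_const_Ico]
      norm_num
    rw [hpre]
  have hfin : (∫⁻ y, φ y) < ⊤ := by
    rw [hdecomp]
    rw [tsum_congr htrans]
    rw [← lintegral_tsum (f := fun (n : ℤ) (s : ℝ) => φ (s + n))
      (fun n => (hφm.comp (measurable_add_const ((n:ℤ):ℝ))).aemeasurable)]
    have : ∀ s : ℝ, (∑' n : ℤ, φ (s + n)) = ENNReal.ofReal (∫ x : ℝ, ‖f x‖ ^ 2) := htsum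
    rw [lintegral_congr this]
    rw [setLIntegral_const]
    simp [Real.volume_Ico]
  exact hfin

theorem stmt_18 (f : ℝ → ℂ) (hf : MemLp f 2 (volume : Measure ℝ))
    (hsupp : Function.support f ⊆ Set.Icc (-1) 1)
    (hnorm : (∫ x : ℝ, ‖f x‖ ^ 2) = 1)
    (R : ℝ) (hR : 0 < R) :
    0 < ∫ y in {y : ℝ | R < |y|}, ‖FT f y‖ ^ 2 := by
  classical
  set f' : ℝ → ℂ := Set.indicator (Set.Icc (-1) 1) (hf.1.mk f) with hf'def
  have hsm' : StronglyMeasurable f' := (hf.1.stronglyMeasurable_mk).indicator measurableSet_Icc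
  have hae : f =ᵐ[volume] f' := by
    have h1 : f = Set.indicator (Set.Icc (-1) 1) f := (Set.indicator_eq_self.mpr hsupp).symm
    nth_rewrite 1 [h1]
    exact (hf.1.ae_eq_mk).indicator
  have hsupp' : Function.support f' ⊆ Set.Icc (-1) 1 := Set.support_indicator_subset
  have hf2' : MemLp f' 2 volume := hf.ae_eq hae
  have hnorm' : (∫ x : ℝ, ‖f' x‖ ^ 2) = 1 := by
    rw [← hnorm]
    exact (integral_congr_ae (hae.mono fun x hx => by simp only [hx])).symm
  have hFTeq : FT f = FT f' := by
    funext y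
    unfold FT
    congr 1
    exact integral_congr_ae (hae.mono fun x hx => by dsimp only; rw [hx])
  rw [hFTeq]
  have hi : Integrable f' := integrable_of_supp hf2' hsupp'
  set S : Set ℝ := {y : ℝ | R < |y|} with hS
  have hSopen : IsOpen S := isOpen_lt continuous_const continuous_abs
  have hIntS : IntegrableOn (fun y => ‖FT f' y‖ ^ 2) S :=
    (integrable_sq_FT hsm' hf2' hsupp').integrableOn
  have hnonneg : 0 ≤ᵐ[volume.restrict S] fun y => ‖FT f' y‖ ^ 2 :=
    ae_of_all _ fun y => by positivity
  rcases lt_or_ge 0 (∫ y in S, ‖FT f' y‖ ^ 2) with h | h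
  · exact h
  exfalso
  have h0 : (∫ y in S, ‖FT f' y‖ ^ 2) = 0 := le_antisymm h (integral_nonneg_of_ae hnonneg)
  have hzero_ae : (fun y => ‖FT f' y‖ ^ 2) =ᵐ[volume.restrict S] 0 :=
    (integral_eq_zero_iff_of_nonneg_ae hnonneg hIntS).mp h0
  have hcont : Continuous fun y : ℝ => ‖FT f' y‖ ^ 2 := (continuous_FT hi hsupp').norm.pow 2
  have hzS : ∀ y ∈ S, FT f' y = 0 := by
    intro y hy
    by_contra hne
    set U := S ∩ {y : ℝ | 0 < ‖FT f' y‖ ^ 2} with hU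
    have hUopen : IsOpen U := hSopen.inter (isOpen_lt continuous_const hcont)
    have hyU : y ∈ U := ⟨hy, by simp only [Set.mem_setOf_eq]; exact pow_pos (norm_pos_iff.mpr hne) 2⟩
    have hpos := hUopen.measure_pos volume ⟨y, hyU⟩
    have hnull : (volume.restrict S) {y : ℝ | ¬ ‖FT f' y‖ ^ 2 = 0} = 0 := by
      have := ae_iff.mp hzero_ae
      simpa using this
    have hsub : U ⊆ {y : ℝ | ¬ ‖FT f' y‖ ^ 2 = 0} := fun u hu => by
      have h2 := hu.2
      simp only [Set.mem_setOf_eq] at h2 ⊢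
      linarith
    have hUzero : volume U = 0 := by
      have hres : (volume.restrict S) U = volume U := by
        rw [Measure.restrict_apply hUopen.measurableSet]
        congr 1
        exact Set.inter_eq_self_of_subset_left Set.inter_subset_left
      rw [← hres]
      exact measure_mono_null hsub hnull
    exact absurd hUzero hpos.ne'
  have hdiff : Differentiable ℂ (FTC f') := differentiable_FTC hi hsupp'
  have hanal : AnalyticOnNhd ℂ (FTC f') Set.univ :=
    (hdiff.differentiableOn).analyticOnNhd isOpen_univ
  have hcne : ((1 / Real.sqrt (2 * π) : ℝ) : ℂ) ≠ 0 := by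
    have : (0:ℝ) < 1 / Real.sqrt (2 * π) := by positivity
    exact_mod_cast this.ne'
  have hgzero : ∀ y : ℝ, R < y → FTC f' y = 0 := by
    intro y hy
    have hyS : y ∈ S := by
      simp only [hS, Set.mem_setOf_eq]
      rw [abs_of_pos (lt_trans hR hy)]
      exact hy
    have hz := hzS y hyS
    rw [FT_eq_FTC] at hz
    exact (mul_eq_zero.mp hz).resolve_left hcne
  set z₀ : ℂ := ((R + 1 : ℝ) : ℂ) with hz₀
  have hfreq : ∃ᶠ z in nhdsWithin z₀ {z₀}ᶜ, FTC f' z = 0 := by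
    have htend : Filter.Tendsto (fun y : ℝ => (y : ℂ))
        (nhdsWithin (R+1) (Set.Ioi (R+1))) (nhdsWithin z₀ {z₀}ᶜ) := by
      refine tendsto_nhdsWithin_of_tendsto_nhds_of_eventually_within _ ?_ ?_
      · exact (Complex.continuous_ofReal.tendsto _).mono_left nhdsWithin_le_nhds
      · filter_upwards [self_mem_nhdsWithin] with y hy
        simp only [Set.mem_compl_iff, Set.mem_singleton_iff]
        intro hc
        rw [hz₀] at hc
        have hyR : y = R + 1 := by exact_mod_cast hc
        have := Set.mem_Ioi.mp hy
        linarith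
    have hev : ∀ᶠ y in nhdsWithin (R+1 : ℝ) (Set.Ioi (R+1 : ℝ)), FTC f' ((y : ℝ) : ℂ) = 0 := by
      filter_upwards [self_mem_nhdsWithin] with y hy
      exact hgzero y (by linarith [Set.mem_Ioi.mp hy, hR])
    exact htend.frequently hev.frequently
  have hEq : Set.EqOn (FTC f') 0 Set.univ :=
    hanal.eqOn_zero_of_preconnected_of_frequently_eq_zero isPreconnected_univ
      (Set.mem_univ z₀) hfreq
  have hps := key_parseval hsm' hf2' hsupp' 0
  rw [hnorm'] at hps
  have hzero : ∀ n : ℤ, ‖FT f' ((0:ℝ) - n)‖ ^ 2 = (0:ℝ) := by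
    intro n
    rw [FT_eq_FTC, hEq (Set.mem_univ _)]
    simp
  have h2 : HasSum (fun _ : ℤ => (0:ℝ)) 1 := by
    have : (fun n : ℤ => ‖FT f' ((0:ℝ) - n)‖ ^ 2) = fun _ : ℤ => (0:ℝ) := funext hzero
    rwa [this] at hps
  have h1 : (1 : ℝ) = 0 := h2.unique hasSum_zero
  norm_num at h1
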